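/- In the product-space setting with weights Wᵢ, preconditioner Γ, and maximally monotone C on H, the operator W^{-1}Γ𝐂 (with 𝐂 = WΣ*CΣ + N_𝒮) is maximally monotone in 𝐇 endowed with the inner product ⟨·,·⟩_{Γ^{-1}W}, and its resolvent satisfies J_{W^{-1}Γ𝐂} = Σ* ∘ J_{ΓC} ∘ Σ. -/

import Mathlib

open RealInnerProductSpace

section AuxOps
variable {H : Type*} [NormedAddCommGroup H] [InnerProductSpace ℝ H]

/-- iterated B ↦ B - B², for the positivity-of-product argument. -/
noncomputable def iterB (B : H →L[ℝ] H) : ℕ → (H →L[ℝ] H)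
  | 0 => B
  | n+1 => iterB B n - (iterB B n).comp (iterB B n)

lemma prod_pos_aux (A B : H →L[ℝ] H)
    (hBs : ∀ x y, ⟪B x, y⟫ = ⟪x, B y⟫)
    (hAB : ∀ x, A (B x) = B (A x))
    (hA : ∀ x, 0 ≤ ⟪A x, x⟫) (hB : ∀ x, 0 ≤ ⟪B x, x⟫)
    (hB1 : ∀ x, ⟪B x, x⟫ ≤ ⟪x, x⟫) :
    ∀ x, 0 ≤ ⟪A (B x), x⟫ := by
  have key : ∀ n, (∀ x y, ⟪iterB B n x, y⟫ = ⟪x, iterB B n y⟫) ∧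
      (∀ x, A (iterB B n x) = iterB B n (A x)) ∧
      (∀ x, 0 ≤ ⟪iterB B n x, x⟫) ∧ (∀ x, ⟪iterB B n x, x⟫ ≤ ⟪x, x⟫) := by
    intro n
    induction n with
    | zero => exact ⟨hBs, hAB, hB, hB1⟩
    | succ n ih =>
      obtain ⟨hs, hc, hp, hu⟩ := ih
      set Bn := iterB B n with hBn
      have hsimp : ∀ x : H, iterB B (n+1) x = Bn x - Bn (Bn x) := by
        intro x; rfl
      refine ⟨?_, ?_, ?_, ?_⟩
      · intro x y
        simp only [hsimp, inner_sub_left, inner_sub_right, hs]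
      · intro x
        simp only [hsimp, map_sub, hc]
      · intro x
        have e1 : ⟪iterB B (n+1) x, x⟫
            = (⟪Bn x, Bn x⟫ - ⟪Bn (Bn x), Bn x⟫) + ⟪Bn (x - Bn x), x - Bn x⟫ := by
          simp only [hsimp, map_sub, inner_sub_left, inner_sub_right]
          linarith [hs (Bn x) x, real_inner_comm (Bn x) (Bn (Bn x))]
        rw [e1]
        have := hu (Bn x)
        have := hp (x - Bn x)
        linarith
      · intro x
        have h2 : ⟪Bn x, Bn x⟫ = ⟪Bn (Bn x), x⟫ := by rw [hs (Bn x) x]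
        have := hp (Bn x)
        have hux := hu x
        simp only [hsimp, inner_sub_left]
        nlinarith [real_inner_self_nonneg (x := Bn x)]
  intro x
  have tele : ∀ m, ⟪A (B x), x⟫
      = (∑ k ∈ Finset.range m, ⟪A (iterB B k x), iterB B k x⟫) + ⟪A (iterB B m x), x⟫ := by
    intro m
    induction m with
    | zero => simp [iterB]
    | succ m ih =>
      rw [ih, Finset.sum_range_succ]
      have hsimp : iterB B (m+1) x = iterB B m x - iterB B m (iterB B m x) := rfl
      have hs := (key m).1
      have hc := (key m).2.1
      rw [hsimp]
      have : ⟪A (iterB B m x - iterB B m (iterB B m x)), x⟫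
          = ⟪A (iterB B m x), x⟫ - ⟪A (iterB B m x), iterB B m x⟫ := by
        rw [map_sub, inner_sub_left]
        congr 1
        rw [hc, hs]
      rw [this]; ring
  have term_nonneg : ∀ k, 0 ≤ ⟪A (iterB B k x), iterB B k x⟫ := fun k => hA _
  have sq_eq : ∀ m, ⟪iterB B m x, iterB B m x⟫ = ⟪iterB B m (iterB B m x), x⟫ := by
    intro m; rw [(key m).1 (iterB B m x) x]
  have tele2 : ∀ m, ⟪B x, x⟫
      = (∑ k ∈ Finset.range m, ⟪iterB B k x, iterB B k x⟫) + ⟪iterB B m x, x⟫ := by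
    intro m
    induction m with
    | zero => simp [iterB]
    | succ m ih =>
      rw [ih, Finset.sum_range_succ]
      have hsimp : iterB B (m+1) x = iterB B m x - iterB B m (iterB B m x) := rfl
      rw [hsimp, inner_sub_left, ← sq_eq m]
      ring
  have bdd : ∀ m, ∑ k ∈ Finset.range m, ⟪iterB B k x, iterB B k x⟫ ≤ ⟪B x, x⟫ := by
    intro m
    have := (key m).2.2.1 x
    have := tele2 m
    linarith
  have summ : Summable (fun k => ⟪iterB B k x, iterB B k x⟫) :=
    summable_of_sum_range_le (fun k => real_inner_self_nonneg) bdd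
  have tend0 : Filter.Tendsto (fun m => ⟪iterB B m x, iterB B m x⟫) Filter.atTop (nhds 0) :=
    summ.tendsto_atTop_zero
  have tendn : Filter.Tendsto (fun m => ‖iterB B m x‖) Filter.atTop (nhds 0) := by
    have : (fun m => ‖iterB B m x‖) = fun m => Real.sqrt ⟪iterB B m x, iterB B m x⟫ := by
      funext m; rw [real_inner_self_eq_norm_sq, Real.sqrt_sq (norm_nonneg _)]
    rw [this]
    simpa using tend0.sqrt
  have lower : ∀ m, -(‖A‖ * ‖iterB B m x‖ * ‖x‖) ≤ ⟪A (B x), x⟫ := by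
    intro m
    have h1 := tele m
    have h2 : 0 ≤ ∑ k ∈ Finset.range m, ⟪A (iterB B k x), iterB B k x⟫ :=
      Finset.sum_nonneg fun k _ => term_nonneg k
    have h3 : -(‖A‖ * ‖iterB B m x‖ * ‖x‖) ≤ ⟪A (iterB B m x), x⟫ := by
      have := abs_real_inner_le_norm (A (iterB B m x)) x
      have hn := A.le_opNorm (iterB B m x)
      have habs : |⟪A (iterB B m x), x⟫| ≤ ‖A‖ * ‖iterB B m x‖ * ‖x‖ := by
        calc |⟪A (iterB B m x), x⟫| ≤ ‖A (iterB B m x)‖ * ‖x‖ := this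
        _ ≤ ‖A‖ * ‖iterB B m x‖ * ‖x‖ := by
            apply mul_le_mul_of_nonneg_right hn (norm_nonneg x)
      linarith [neg_abs_le ⟪A (iterB B m x), x⟫]
    linarith
  have : Filter.Tendsto (fun m => -(‖A‖ * ‖iterB B m x‖ * ‖x‖)) Filter.atTop (nhds 0) := by
    have := (tendn.const_mul ‖A‖).mul_const ‖x‖
    simpa using this.neg
  exact le_of_tendsto this (Filter.Eventually.of_forall lower)

lemma prod_pos (A B : H →L[ℝ] H)
    (hBs : ∀ x y, ⟪B x, y⟫ = ⟪x, B y⟫)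
    (hAB : ∀ x, A (B x) = B (A x))
    (hA : ∀ x, 0 ≤ ⟪A x, x⟫) (hB : ∀ x, 0 ≤ ⟪B x, x⟫) :
    ∀ x, 0 ≤ ⟪A (B x), x⟫ := by
  intro x
  by_cases hB0 : B = 0
  · simp [hB0]
  · have hM : (0:ℝ) < ‖B‖ := norm_pos_iff.mpr hB0
    set B' : H →L[ℝ] H := ‖B‖⁻¹ • B with hB'
    have hB'app : ∀ y, B' y = ‖B‖⁻¹ • B y := fun y => rfl
    have h1 : ∀ x y, ⟪B' x, y⟫ = ⟪x, B' y⟫ := by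
      intro x y
      simp only [hB'app, real_inner_smul_left, real_inner_smul_right, hBs]
    have h2 : ∀ x, A (B' x) = B' (A x) := by
      intro x; simp only [hB'app, map_smul, hAB]
    have h3 : ∀ x, 0 ≤ ⟪B' x, x⟫ := by
      intro x
      simp only [hB'app, real_inner_smul_left]
      exact mul_nonneg (by positivity) (hB x)
    have h4 : ∀ x, ⟪B' x, x⟫ ≤ ⟪x, x⟫ := by
      intro x
      simp only [hB'app, real_inner_smul_left]
      have hb : ⟪B x, x⟫ ≤ ‖B‖ * (‖x‖ * ‖x‖) := by
        calc ⟪B x, x⟫ ≤ ‖B x‖ * ‖x‖ := real_inner_le_norm _ _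
        _ ≤ ‖B‖ * ‖x‖ * ‖x‖ := mul_le_mul_of_nonneg_right (B.le_opNorm x) (norm_nonneg x)
        _ = ‖B‖ * (‖x‖ * ‖x‖) := by ring
      calc ‖B‖⁻¹ * ⟪B x, x⟫ ≤ ‖B‖⁻¹ * (‖B‖ * (‖x‖ * ‖x‖)) :=
            mul_le_mul_of_nonneg_left hb (by positivity)
      _ = ‖x‖ * ‖x‖ := by field_simp
      _ = ⟪x, x⟫ := (real_inner_self_eq_norm_mul_norm x).symm
    have := prod_pos_aux A B' h1 h2 hA h3 h4 x
    have heq : ⟪A (B x), x⟫ = ‖B‖ * ⟪A (B' x), x⟫ := by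
      simp only [hB'app, map_smul, real_inner_smul_left]
      field_simp
    rw [heq]
    exact mul_nonneg hM.le this

lemma psd_apply_eq_zero (A : H →L[ℝ] H)
    (hAs : ∀ x y, ⟪A x, y⟫ = ⟪x, A y⟫) (hA : ∀ x, 0 ≤ ⟪A x, x⟫)
    (x : H) (hx : ⟪A x, x⟫ = 0) : A x = 0 := by
  set a : ℝ := ‖A x‖ ^ 2 with ha
  have ha0 : 0 ≤ a := by positivity
  set K : ℝ := ⟪A (A x), A x⟫ with hK
  have hK0 : 0 ≤ K := hA (A x)
  have key : ∀ t : ℝ, 0 ≤ 2 * t * a + t ^ 2 * K := by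
    intro t
    have h0 := hA (x + t • A x)
    have : ⟪A (x + t • A x), x + t • A x⟫ = ⟪A x, x⟫ + 2 * t * a + t ^ 2 * K := by
      simp only [map_add, map_smul, inner_add_left, inner_add_right,
        real_inner_smul_left, real_inner_smul_right]
      have e1 : ⟪A x, A x⟫ = a := real_inner_self_eq_norm_sq (A x)
      have e2 : ⟪A (A x), x⟫ = a := by rw [hAs (A x) x, real_inner_comm]; exact e1
      rw [e1, e2, ← hK]; ring
    rw [this, hx] at h0; linarith
  have hkey := key (-(a / (K + 1)))
  have hY : (0:ℝ) < (K+1)^2 := by positivity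
  have h3 : 2 * (-(a / (K + 1))) * a + (-(a / (K + 1))) ^ 2 * K
      = (-(a^2*(K+2))) / (K+1)^2 := by field_simp; ring
  rw [h3] at hkey
  have h4 : (0:ℝ) * (K+1)^2 ≤ -(a^2*(K+2)) := (le_div_iff₀ hY).mp hkey
  have hax : a = 0 := by nlinarith
  have : ‖A x‖ = 0 := by
    simpa [ha] using pow_eq_zero_iff (n := 2) (by norm_num) |>.mp hax
  simpa using this

end AuxOps

def IsMonotoneOp {H : Type*} [NormedAddCommGroup H] [InnerProductSpace ℝ H]
    (A : H → Set H) : Prop :=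
  ∀ ⦃x u y v⦄, u ∈ A x → v ∈ A y → 0 ≤ ⟪u - v, x - y⟫

def IsMaxMonotoneOp {H : Type*} [NormedAddCommGroup H] [InnerProductSpace ℝ H]
    (A : H → Set H) : Prop :=
  IsMonotoneOp A ∧ ∀ x u, (∀ y v, v ∈ A y → 0 ≤ ⟪u - v, x - y⟫) → u ∈ A x

/-- Membership in the subspace 𝒮 = ran Σ*. -/
def InS {H : Type*} [NormedAddCommGroup H] [InnerProductSpace ℝ H]
    {n : ℕ} (Hsub : Fin n → Submodule ℝ H) [∀ i, CompleteSpace (Hsub i)]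
    (x : Fin n → H) : Prop :=
  ∃ a : H, ∀ i, x i = ((Hsub i).orthogonalProjectionOnto a : H)

/-- Membership in 𝐂 x = W Σ* C Σ x + N_𝒮 x. -/
def InCbold {H : Type*} [NormedAddCommGroup H] [InnerProductSpace ℝ H]
    {n : ℕ} (W : Fin n → H →L[ℝ] H) (Hsub : Fin n → Submodule ℝ H)
    [∀ i, CompleteSpace (Hsub i)] (C : H → Set H)
    (x w : Fin n → H) : Prop :=
  ∃ c ∈ C (∑ i, W i (x i)), ∃ nv : Fin n → H,
    (InS Hsub x ∧ ∀ s : Fin n → H, InS Hsub s → ∑ i, ⟪nv i, s i⟫ = 0) ∧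
    ∀ i, w i = W i (((Hsub i).orthogonalProjectionOnto c : H)) + nv i

/-- Membership in W⁻¹Γ𝐂 x. -/
def InD {H : Type*} [NormedAddCommGroup H] [InnerProductSpace ℝ H]
    {n : ℕ} (W : Fin n → H →L[ℝ] H) (Hsub : Fin n → Submodule ℝ H)
    [∀ i, CompleteSpace (Hsub i)] (Γ : H →L[ℝ] H) (C : H → Set H)
    (x u : Fin n → H) : Prop :=
  ∃ w : Fin n → H, InCbold W Hsub C x w ∧ ∀ i, u i ∈ Hsub i ∧ W i (u i) = Γ (w i)

/-- W⁻¹Γ𝐂 is maximally monotone in 𝐇 = ∏ᵢHᵢ endowed with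
⟨·,·⟩_{Γ⁻¹W}, and its resolvent is J_{W⁻¹Γ𝐂} = Σ* ∘ J_{ΓC} ∘ Σ. -/
theorem Cbold_max_monotone_and_resolvent
    {H : Type*} [NormedAddCommGroup H] [InnerProductSpace ℝ H] [CompleteSpace H]
    (n : ℕ) (W : Fin n → H →L[ℝ] H) (Hsub : Fin n → Submodule ℝ H)
    [∀ i, CompleteSpace (Hsub i)]
    (hWsa : ∀ i, IsSelfAdjoint (W i))
    (hWpos : ∀ i, ∀ x, 0 ≤ ⟪W i x, x⟫)
    (hker : ∀ i, LinearMap.ker (W i : H →ₗ[ℝ] H) = (Hsub i)ᗮ)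
    (hWstrong : ∀ i, ∃ c : ℝ, 0 < c ∧ ∀ x ∈ Hsub i, c * ‖x‖ ^ 2 ≤ ⟪W i x, x⟫)
    (hsum : ∀ x : H, ∑ i, W i x = x)
    (Γ Γinv : H →L[ℝ] H) (hΓsa : IsSelfAdjoint Γ)
    (hΓpos : ∃ c : ℝ, 0 < c ∧ ∀ x, c * ‖x‖ ^ 2 ≤ ⟪Γ x, x⟫)
    (hΓinv : ∀ x, Γinv (Γ x) = x ∧ Γ (Γinv x) = x)
    (hΓH : ∀ i, ∀ x ∈ Hsub i, Γ x ∈ Hsub i)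
    (hcomm : ∀ i, ∀ x, Γ (W i x) = W i (Γ x))
    (C : H → Set H) (hCmax : IsMaxMonotoneOp C)
    (JΓC : H → H)
    (hJΓC : ∀ p q, JΓC p = q ↔ ∃ c ∈ C q, p = q + Γ c) :
    -- monotone in H_{Γ⁻¹W}
    (∀ x u y v : Fin n → H, (∀ i, x i ∈ Hsub i) → (∀ i, y i ∈ Hsub i) →
      InD W Hsub Γ C x u → InD W Hsub Γ C y v →
      0 ≤ ∑ i, ⟪Γinv (W i (u i - v i)), x i - y i⟫) ∧
    -- maximal in H_{Γ⁻¹W}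
    (∀ x u : Fin n → H, (∀ i, x i ∈ Hsub i) → (∀ i, u i ∈ Hsub i) →
      (∀ y v : Fin n → H, (∀ i, y i ∈ Hsub i) → InD W Hsub Γ C y v →
        0 ≤ ∑ i, ⟪Γinv (W i (u i - v i)), x i - y i⟫) →
      InD W Hsub Γ C x u) ∧
    -- resolvent identity J_{W⁻¹Γ𝐂} = Σ* ∘ J_{ΓC} ∘ Σ
    (∀ z x : Fin n → H, (∀ i, z i ∈ Hsub i) →
      (((∀ i, x i ∈ Hsub i) ∧ InD W Hsub Γ C x (fun i => z i - x i)) ↔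
        ∀ i, x i = ((Hsub i).orthogonalProjectionOnto (JΓC (∑ j, W j (z j))) : H))) := by
  -- ## basic facts
  have hWsym : ∀ i, ∀ a b : H, ⟪W i a, b⟫ = ⟪a, W i b⟫ := fun i =>
    (ContinuousLinearMap.isSelfAdjoint_iff_isSymmetric.mp (hWsa i))
  have hΓsym : ∀ a b : H, ⟪Γ a, b⟫ = ⟪a, Γ b⟫ :=
    (ContinuousLinearMap.isSelfAdjoint_iff_isSymmetric.mp hΓsa)
  have hWker : ∀ i, ∀ a ∈ (Hsub i)ᗮ, W i a = 0 := by
    intro i a ha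
    have : a ∈ LinearMap.ker (W i : H →ₗ[ℝ] H) := by rw [hker i]; exact ha
    simpa using this
  have hWproj : ∀ i (a : H), W i (((Hsub i).orthogonalProjectionOnto a : H)) = W i a := by
    intro i a
    have h := hWker i _ (Submodule.sub_starProjection_mem_orthogonal (K := Hsub i) a)
    rw [map_sub, sub_eq_zero] at h
    exact h.symm
  have hWran : ∀ i (a : H), W i a ∈ Hsub i := by
    intro i a
    rw [← (Hsub i).orthogonal_orthogonal]
    rw [Submodule.mem_orthogonal]
    intro u hu
    rw [real_inner_comm, hWsym i a u, hWker i u hu, inner_zero_right]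
  have innerP : ∀ i (h a : H), h ∈ Hsub i →
      ⟪h, ((Hsub i).orthogonalProjectionOnto a : H)⟫ = ⟪h, a⟫ := by
    intro i h a hh
    have horth := Submodule.sub_starProjection_mem_orthogonal (K := Hsub i) a
    have : ⟪h, a - ((Hsub i).orthogonalProjectionOnto a : H)⟫ = 0 :=
      (Submodule.mem_orthogonal (Hsub i) _).mp horth h hh
    rw [inner_sub_right] at this
    linarith
  have hsumWP : ∀ a : H, ∑ i, W i (((Hsub i).orthogonalProjectionOnto a : H)) = a := by
    intro a
    calc ∑ i, W i (((Hsub i).orthogonalProjectionOnto a : H)) = ∑ i, W i a := by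
          exact Finset.sum_congr rfl fun i _ => hWproj i a
    _ = a := hsum a
  have hΓinvsym : ∀ a b : H, ⟪Γinv a, b⟫ = ⟪a, Γinv b⟫ := by
    intro a b
    calc ⟪Γinv a, b⟫ = ⟪Γinv a, Γ (Γinv b)⟫ := by rw [(hΓinv b).2]
    _ = ⟪Γ (Γinv a), Γinv b⟫ := by rw [hΓsym]
    _ = ⟪a, Γinv b⟫ := by rw [(hΓinv a).2]
  have hΓinvcomm : ∀ i (a : H), Γinv (W i a) = W i (Γinv a) := by
    intro i a
    have : W i a = Γ (W i (Γinv a)) := by rw [hcomm i, (hΓinv a).2]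
    rw [this, (hΓinv _).1]
  have hΓorth : ∀ i, ∀ a ∈ (Hsub i)ᗮ, Γ a ∈ (Hsub i)ᗮ := by
    intro i a ha
    rw [Submodule.mem_orthogonal]
    intro u hu
    rw [real_inner_comm, hΓsym a u, real_inner_comm]
    exact (Submodule.mem_orthogonal (Hsub i) a).mp ha _ (hΓH i u hu)
  have hΓinvH : ∀ i, ∀ a ∈ Hsub i, Γinv a ∈ Hsub i := by
    intro i a ha
    set p : H := ((Hsub i).orthogonalProjectionOnto (Γinv a) : H) with hp
    have hq : Γinv a - p ∈ (Hsub i)ᗮ := Submodule.sub_starProjection_mem_orthogonal _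
    have hΓq1 : Γ (Γinv a - p) ∈ (Hsub i)ᗮ := hΓorth i _ hq
    have hΓq2 : Γ (Γinv a - p) ∈ Hsub i := by
      rw [map_sub, (hΓinv a).2]
      exact Submodule.sub_mem _ ha (hΓH i p (SetLike.coe_mem _))
    have hΓq0 : Γ (Γinv a - p) = 0 := by
      have := (Submodule.mem_orthogonal (Hsub i) _).mp hΓq1 _ hΓq2
      rwa [inner_self_eq_zero] at this
    have : Γinv a - p = 0 := by
      have := congrArg Γinv hΓq0
      rwa [(hΓinv _).1, map_zero] at this
    have : Γinv a = p := by rwa [sub_eq_zero] at this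
    rw [this]
    exact SetLike.coe_mem _
  have hΓinvpos : ∀ a : H, 0 ≤ ⟪Γinv a, a⟫ := by
    intro a
    obtain ⟨c, hc, hcpos⟩ := hΓpos
    calc (0:ℝ) ≤ c * ‖Γinv a‖ ^ 2 := by positivity
    _ ≤ ⟪Γ (Γinv a), Γinv a⟫ := hcpos _
    _ = ⟪Γinv a, a⟫ := by rw [hΓsym, (hΓinv a).2]
  -- the quadratic form d ↦ ⟪Γinv (W i d), d⟫ is nonneg
  have hquad : ∀ i (d : H), 0 ≤ ⟪Γinv (W i d), d⟫ := by
    intro i d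
    have := prod_pos (W i) Γinv hΓinvsym
      (fun a => by rw [hΓinvcomm i a]) (hWpos i) hΓinvpos d
    rw [hΓinvcomm i d]
    exact this
  -- ... and it vanishes only if W i d = 0
  have hquad0 : ∀ i (d : H), ⟪Γinv (W i d), d⟫ = 0 → W i d = 0 := by
    intro i d hd
    set E : H →L[ℝ] H := Γinv.comp (W i) with hE
    have hEapp : ∀ a, E a = Γinv (W i a) := fun a => rfl
    have hEsym : ∀ a b, ⟪E a, b⟫ = ⟪a, E b⟫ := by
      intro a b
      rw [hEapp, hEapp, hΓinvsym, hWsym, ← hΓinvcomm i b]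
    have hEpos : ∀ a, 0 ≤ ⟪E a, a⟫ := fun a => hquad i a
    have hE0 : E d = 0 := psd_apply_eq_zero E hEsym hEpos d hd
    have : Γinv (W i d) = 0 := hE0
    have := congrArg Γ this
    rwa [(hΓinv _).2, map_zero] at this
  -- Σ applied to an element of 𝒮 recovers the witness
  have hSig : ∀ (x : Fin n → H) (a : H),
      (∀ i, x i = ((Hsub i).orthogonalProjectionOnto a : H)) → ∑ i, W i (x i) = a := by
    intro x a hx
    calc ∑ i, W i (x i) = ∑ i, W i (((Hsub i).orthogonalProjectionOnto a : H)) :=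
          Finset.sum_congr rfl fun i _ => by rw [hx i]
    _ = a := hsumWP a
  -- ## Part 3 : resolvent identity
  have res : ∀ z x : Fin n → H, (∀ i, z i ∈ Hsub i) →
      (((∀ i, x i ∈ Hsub i) ∧ InD W Hsub Γ C x (fun i => z i - x i)) ↔
        ∀ i, x i = ((Hsub i).orthogonalProjectionOnto (JΓC (∑ j, W j (z j))) : H)) := by
    intro z x hz
    set p : H := ∑ j, W j (z j) with hpdef
    constructor
    · -- forward
      rintro ⟨hx1, w, ⟨c, hc, nv, ⟨⟨a, hInSx⟩, hnv⟩, hw⟩, hWu⟩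
      have hSigx : ∑ i, W i (x i) = a := hSig x a hInSx
      have hxP : ∀ i, x i = ((Hsub i).orthogonalProjectionOnto (∑ j, W j (x j)) : H) := by
        intro i; rw [hSigx]; exact hInSx i
      -- w i ∈ Hsub i
      have hwH : ∀ i, w i ∈ Hsub i := by
        intro i
        have h1 : Γ (w i) = W i (z i - x i) := ((hWu i).2).symm
        have : w i = Γinv (W i (z i - x i)) := by
          rw [← h1, (hΓinv _).1]
        rw [this]
        exact hΓinvH i _ (hWran i _)
      have hnvH : ∀ i, nv i ∈ Hsub i := by
        intro i
        have : nv i = w i - W i (((Hsub i).orthogonalProjectionOnto c : H)) := by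
          rw [hw i]; abel
        rw [this]
        exact Submodule.sub_mem _ (hwH i) (hWran i _)
      -- ∑ nv i = 0
      have hnvsum : ∑ i, nv i = 0 := by
        have hzero : ∀ b : H, ⟪∑ i, nv i, b⟫ = 0 := by
          intro b
          have hs : InS Hsub (fun i => ((Hsub i).orthogonalProjectionOnto b : H)) :=
            ⟨b, fun i => rfl⟩
          have := hnv _ hs
          rw [sum_inner]
          rw [← this]
          exact Finset.sum_congr rfl fun i _ => (innerP i (nv i) b (hnvH i)).symm
        have := hzero (∑ i, nv i)
        rwa [inner_self_eq_zero] at this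
      -- Σz - Σx = Γ c
      have hkey : p = (∑ i, W i (x i)) + Γ c := by
        have h1 : ∀ i, W i (z i) - W i (x i) = Γ (w i) := by
          intro i
          have := (hWu i).2
          rw [map_sub] at this
          exact this
        have h2 : p - ∑ i, W i (x i) = ∑ i, Γ (w i) := by
          rw [hpdef, ← Finset.sum_sub_distrib]
          exact Finset.sum_congr rfl fun i _ => h1 i
        have h3 : ∑ i, Γ (w i) = Γ (∑ i, w i) := (map_sum Γ w Finset.univ).symm
        have h4 : ∑ i, w i = c + ∑ i, nv i := by
          calc ∑ i, w i
              = ∑ i, (W i (((Hsub i).orthogonalProjectionOnto c : H)) + nv i) :=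
                Finset.sum_congr rfl fun i _ => hw i
          _ = (∑ i, W i (((Hsub i).orthogonalProjectionOnto c : H))) + ∑ i, nv i :=
                Finset.sum_add_distrib
          _ = c + ∑ i, nv i := by rw [hsumWP c]
        rw [h4, hnvsum, add_zero] at h3
        rw [h3] at h2
        linear_combination (norm := abel) h2
      have hres : JΓC p = ∑ i, W i (x i) :=
        (hJΓC p (∑ i, W i (x i))).mpr ⟨c, hc, hkey⟩
      intro i
      rw [hres]
      exact hxP i
    · -- backward
      intro hx
      set q : H := JΓC p with hq
      obtain ⟨c, hc, hpq⟩ := (hJΓC p q).mp rfl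
      have hx1 : ∀ i, x i ∈ Hsub i := by
        intro i; rw [hx i]; exact SetLike.coe_mem _
      have hSigx : ∑ i, W i (x i) = q := hSig x q hx
      refine ⟨hx1, ?_⟩
      set w : Fin n → H := fun i => Γinv (W i (z i - x i)) with hwdef
      set nv : Fin n → H := fun i =>
        w i - W i (((Hsub i).orthogonalProjectionOnto c : H)) with hnvdef
      have hwH : ∀ i, w i ∈ Hsub i := fun i => hΓinvH i _ (hWran i _)
      refine ⟨w, ⟨c, by rwa [hSigx], nv, ⟨⟨q, hx⟩, ?_⟩, fun i => by
        simp only [hnvdef]; abel⟩, fun i => ?_⟩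
      · -- nv ⊥ 𝒮
        rintro s ⟨a, hs⟩
        have term : ∀ i, ⟪nv i, s i⟫
            = ⟪Γinv (W i (z i - x i)), a⟫ - ⟪W i c, a⟫ := by
          intro i
          simp only [hnvdef, hwdef]
          rw [inner_sub_left, hs i]
          congr 1
          · exact innerP i _ a (hwH i)
          · rw [hWproj i c]
            exact innerP i _ a (hWran i c)
        rw [Finset.sum_congr rfl fun i _ => term i, Finset.sum_sub_distrib]
        have e1 : ∑ i, ⟪Γinv (W i (z i - x i)), a⟫ = ⟪c, a⟫ := by
          rw [← sum_inner]
          have : ∑ i, Γinv (W i (z i - x i)) = Γinv (∑ i, W i (z i - x i)) :=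
            (map_sum Γinv _ Finset.univ).symm
          rw [this]
          have h2 : ∑ i, W i (z i - x i) = Γ c := by
            have : ∑ i, W i (z i - x i) = p - ∑ i, W i (x i) := by
              rw [hpdef, ← Finset.sum_sub_distrib]
              exact Finset.sum_congr rfl fun i _ => by rw [map_sub]
            rw [this, hSigx, hpq]
            abel
          rw [h2, (hΓinv c).1]
        have e2 : ∑ i, ⟪W i c, a⟫ = ⟪c, a⟫ := by
          rw [← sum_inner, hsum c]
        rw [e1, e2, sub_self]
      · -- u i ∈ Hsub i ∧ W i (u i) = Γ (w i)
        constructor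
        · exact Submodule.sub_mem _ (hz i) (hx1 i)
        · rw [hwdef, (hΓinv _).2]
  -- ## Part 1 : monotonicity
  have mono : ∀ x u y v : Fin n → H, (∀ i, x i ∈ Hsub i) → (∀ i, y i ∈ Hsub i) →
      InD W Hsub Γ C x u → InD W Hsub Γ C y v →
      0 ≤ ∑ i, ⟪Γinv (W i (u i - v i)), x i - y i⟫ := by
    intro x u y v hx1 hy1 hu hv
    obtain ⟨wu, ⟨c, hc, nvu, ⟨hInSx, hnvu⟩, hwu⟩, hWu⟩ := hu
    obtain ⟨wv, ⟨c', hc', nvv, ⟨hInSy, hnvv⟩, hwv⟩, hWv⟩ := hv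
    have term : ∀ i, ⟪Γinv (W i (u i - v i)), x i - y i⟫
        = ⟪W i c - W i c', x i - y i⟫ + ⟪nvu i - nvv i, x i - y i⟫ := by
      intro i
      have h1 : Γinv (W i (u i - v i)) = wu i - wv i := by
        rw [map_sub, (hWu i).2, (hWv i).2, ← map_sub, (hΓinv _).1]
      rw [h1, hwu i, hwv i, hWproj, hWproj, ← inner_add_left]
      congr 1
      abel
    rw [Finset.sum_congr rfl fun i _ => term i, Finset.sum_add_distrib]
    have hperp : ∑ i, ⟪nvu i - nvv i, x i - y i⟫ = 0 := by
      have expand : ∀ i, ⟪nvu i - nvv i, x i - y i⟫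
          = ⟪nvu i, x i⟫ - ⟪nvu i, y i⟫ - ⟪nvv i, x i⟫ + ⟪nvv i, y i⟫ := by
        intro i; rw [inner_sub_left, inner_sub_right, inner_sub_right]; ring
      rw [Finset.sum_congr rfl fun i _ => expand i]
      have h1 := hnvu x hInSx
      have h2 := hnvu y hInSy
      have h3 := hnvv x hInSx
      have h4 := hnvv y hInSy
      rw [Finset.sum_add_distrib, Finset.sum_sub_distrib, Finset.sum_sub_distrib,
        h1, h2, h3, h4]
      ring
    have hmono : 0 ≤ ∑ i, ⟪W i c - W i c', x i - y i⟫ := by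
      have term2 : ∀ i, ⟪W i c - W i c', x i - y i⟫ = ⟪c - c', W i (x i - y i)⟫ := by
        intro i
        rw [← map_sub, hWsym]
      rw [Finset.sum_congr rfl fun i _ => term2 i, ← inner_sum]
      have : ∑ i, W i (x i - y i) = (∑ i, W i (x i)) - ∑ i, W i (y i) := by
        rw [← Finset.sum_sub_distrib]
        exact Finset.sum_congr rfl fun i _ => by rw [map_sub]
      rw [this]
      exact hCmax.1 hc hc'
    linarith [hperp, hmono]
  refine ⟨mono, ?_, res⟩
  -- ## Part 2 : maximality
  intro x u hx1 hu1 hyp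
  set z : Fin n → H := fun i => x i + u i with hz
  have hz1 : ∀ i, z i ∈ Hsub i := fun i => Submodule.add_mem _ (hx1 i) (hu1 i)
  set y : Fin n → H := fun i =>
    ((Hsub i).orthogonalProjectionOnto (JΓC (∑ j, W j (z j))) : H) with hy
  have hyInD : (∀ i, y i ∈ Hsub i) ∧ InD W Hsub Γ C y (fun i => z i - y i) :=
    (res z y hz1).mpr fun i => rfl
  have hineq := hyp y (fun i => z i - y i) hyInD.1 hyInD.2
  have huv : ∀ i, u i - (z i - y i) = y i - x i := by
    intro i; simp only [hz]; abel
  have hsum0 : ∑ i, ⟪Γinv (W i (x i - y i)), x i - y i⟫ ≤ 0 := by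
    have : ∀ i, ⟪Γinv (W i (u i - (z i - y i))), x i - y i⟫
        = -⟪Γinv (W i (x i - y i)), x i - y i⟫ := by
      intro i
      rw [huv i]
      have : y i - x i = -(x i - y i) := by abel
      rw [this, map_neg, map_neg, inner_neg_left]
    rw [Finset.sum_congr rfl fun i _ => this i, Finset.sum_neg_distrib] at hineq
    linarith
  have hterm0 : ∀ i, ⟪Γinv (W i (x i - y i)), x i - y i⟫ = 0 := by
    intro i
    have hup : ∀ j ∈ Finset.univ (α := Fin n),
        0 ≤ ⟪Γinv (W j (x j - y j)), x j - y j⟫ := fun j _ => hquad j _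
    have := Finset.sum_nonneg hup
    have h2 := le_antisymm hsum0 this
    exact (Finset.sum_eq_zero_iff_of_nonneg hup).mp h2 i (Finset.mem_univ i)
  have hxy : ∀ i, x i = y i := by
    intro i
    have hW0 : W i (x i - y i) = 0 := hquad0 i _ (hterm0 i)
    have hmem : x i - y i ∈ (Hsub i)ᗮ := by
      rw [← hker i]; simpa using hW0
    have hmem2 : x i - y i ∈ Hsub i :=
      Submodule.sub_mem _ (hx1 i) (hyInD.1 i)
    have : ⟪x i - y i, x i - y i⟫ = 0 :=
      (Submodule.mem_orthogonal (Hsub i) _).mp hmem _ hmem2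
    rw [inner_self_eq_zero, sub_eq_zero] at this
    exact this
  have hxeq : x = y := funext hxy
  have hueq : u = fun i => z i - y i := by
    funext i
    simp only [hz]
    rw [← hxy i]
    abel
  rw [hxeq, hueq]
  exact hyInD.2
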